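/- Let x(t) = e^{ikt} x̄ be a planar rotating solution of period 2π with x̄ a fixed planar configuration, and let e be a unit vector in the plane. Define φ_i(t) = x_i(t/k) · e. Then the second variation of the action along the vertical variation φ equals π (I(x̄) − α U(x̄)), where I(x̄) = Σ_i m_i |x̄_i|² and U(x̄) = Σ_{i<j} m_i m_j |x̄_i − x̄_j|^{−α}. -/

import Mathlib

open Finset

private lemma sum3 {ι : Type*} (s : Finset ι) (f g h : ι → ℝ) (u v w : ℝ) :
    ∑ i ∈ s, (f i * u + g i * v + h i * w)
      = (∑ i ∈ s, f i) * u + (∑ i ∈ s, g i) * v + (∑ i ∈ s, h i) * w := by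
  simp [Finset.sum_add_distrib, Finset.sum_mul]

/-- For the rotating path `x(t) = e^{ikt} x̄` and the vertical variation
`φ_i(t) = x_i(t/k)·e` (with `e` a planar unit vector), the second variation
equals `π (I(x̄) − α U(x̄))`. -/
theorem second_variation_eq_pi_I_sub_alphaU
    (n : ℕ) (m : Fin n → ℝ) (α : ℝ) (k : ℤ)
    (xbar : Fin n → ℂ) (e : ℂ)
    (hm : ∀ i, 0 < m i) (hα : 0 < α) (hk : k ≠ 0) (he : ‖e‖ = 1)
    (hcoll : ∀ i j, i ≠ j → xbar i ≠ xbar j)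
    (x : ℝ → Fin n → ℂ)
    (hx : ∀ t i, x t i = Complex.exp (Complex.I * (k : ℂ) * (t : ℂ)) * xbar i)
    (φ : Fin n → ℝ → ℝ)
    (hφ : ∀ i t, φ i t = (x (t / (k : ℝ)) i * (starRingEnd ℂ) e).re) :
    (∫ t in (0:ℝ)..(2 * Real.pi),
        ((∑ i, m i * (deriv (φ i) t) ^ 2)
          - α * ∑ i, ∑ j ∈ Finset.univ.filter (fun j => i < j),
              m i * m j / ‖x t i - x t j‖ ^ (α + 2) * (φ i t - φ j t) ^ 2))
      = Real.pi * ((∑ i, m i * ‖xbar i‖ ^ 2)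
          - α * ∑ i, ∑ j ∈ Finset.univ.filter (fun j => i < j),
              m i * m j / ‖xbar i - xbar j‖ ^ α) := by
  have hk1 : (k:ℝ) ≠ 0 := Int.cast_ne_zero.mpr hk
  have hk2 : (k:ℂ) ≠ 0 := by exact_mod_cast hk1
  set c : Fin n → ℂ := fun i => xbar i * (starRingEnd ℂ) e with hc
  -- value of φ
  have hφval : ∀ i t, φ i t = (c i).re * Real.cos t - (c i).im * Real.sin t := by
    intro i t
    rw [hφ, hx]
    have harg : Complex.I * (k : ℂ) * ((t / (k:ℝ) : ℝ) : ℂ) = (t:ℂ) * Complex.I := by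
      push_cast
      field_simp
    rw [harg, mul_assoc, Complex.mul_re, Complex.exp_ofReal_mul_I_re,
      Complex.exp_ofReal_mul_I_im]
    ring
  have hφfun : ∀ i, φ i = fun t => (c i).re * Real.cos t - (c i).im * Real.sin t := by
    intro i; funext t; exact hφval i t
  -- derivative of φ
  have hderiv : ∀ i t, deriv (φ i) t = -((c i).re * Real.sin t) - (c i).im * Real.cos t := by
    intro i t
    rw [hφfun i]
    have h1 : HasDerivAt (fun t => (c i).re * Real.cos t - (c i).im * Real.sin t)
        ((c i).re * (-Real.sin t) - (c i).im * Real.cos t) t :=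
      ((Real.hasDerivAt_cos t).const_mul ((c i).re)).sub
        ((Real.hasDerivAt_sin t).const_mul ((c i).im))
    rw [h1.deriv]
    ring
  -- distances are constant in time
  have hnorm : ∀ (t : ℝ) (i j : Fin n), ‖x t i - x t j‖ = ‖xbar i - xbar j‖ := by
    intro t i j
    rw [hx, hx, ← mul_sub, norm_mul]
    have : Complex.I * (k : ℂ) * (t : ℂ) = (((k:ℝ) * t : ℝ) : ℂ) * Complex.I := by
      push_cast; ring
    rw [this]
    rw [Complex.norm_exp_ofReal_mul_I, one_mul]
  -- norms of c
  have hcnorm : ∀ i, ‖c i‖ = ‖xbar i‖ := by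
    intro i
    rw [hc]
    simp [norm_mul, he]
  have hcsub : ∀ i j, ‖c i - c j‖ = ‖xbar i - xbar j‖ := by
    intro i j
    rw [hc]
    simp only [← sub_mul, norm_mul]
    simp [he]
  -- the coefficient sums
  set A : Fin n → ℝ := fun i => (c i).re with hA
  set B : Fin n → ℝ := fun i => (c i).im with hB
  set K : Fin n → Fin n → ℝ := fun i j => m i * m j / ‖xbar i - xbar j‖ ^ (α + 2) with hK
  set S1 : ℝ := ∑ i, m i * A i ^ 2 with hS1
  set S2 : ℝ := ∑ i, m i * B i ^ 2 with hS2
  set Q1 : ℝ := ∑ i, 2 * (m i * A i * B i) with hQ1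
  set T1 : ℝ := ∑ i, ∑ j ∈ Finset.univ.filter (fun j => i < j),
      K i j * (A i - A j) ^ 2 with hT1
  set T2 : ℝ := ∑ i, ∑ j ∈ Finset.univ.filter (fun j => i < j),
      K i j * (B i - B j) ^ 2 with hT2
  set Q2 : ℝ := ∑ i, ∑ j ∈ Finset.univ.filter (fun j => i < j),
      -(2 * (K i j * (A i - A j) * (B i - B j))) with hQ2
  -- pointwise identity for the integrand
  have hfun : ∀ t : ℝ,
      ((∑ i, m i * (deriv (φ i) t) ^ 2)
          - α * ∑ i, ∑ j ∈ Finset.univ.filter (fun j => i < j),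
              m i * m j / ‖x t i - x t j‖ ^ (α + 2) * (φ i t - φ j t) ^ 2)
        = (S2 - α * T1) * Real.cos t ^ 2 + (Q1 - α * Q2) * (Real.sin t * Real.cos t)
            + (S1 - α * T2) * Real.sin t ^ 2 := by
    intro t
    have h1 : (∑ i, m i * (deriv (φ i) t) ^ 2)
        = S2 * Real.cos t ^ 2 + Q1 * (Real.sin t * Real.cos t) + S1 * Real.sin t ^ 2 := by
      rw [hS1, hS2, hQ1, ← sum3]
      refine Finset.sum_congr rfl fun i _ => ?_
      rw [hderiv]
      ring
    have h2 : (∑ i, ∑ j ∈ Finset.univ.filter (fun j => i < j),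
          m i * m j / ‖x t i - x t j‖ ^ (α + 2) * (φ i t - φ j t) ^ 2)
        = T1 * Real.cos t ^ 2 + Q2 * (Real.sin t * Real.cos t) + T2 * Real.sin t ^ 2 := by
      rw [hT1, hT2, hQ2, ← sum3]
      refine Finset.sum_congr rfl fun i _ => ?_
      rw [← sum3]
      refine Finset.sum_congr rfl fun j _ => ?_
      rw [hnorm, hφval, hφval, hK]
      ring
    rw [h1, h2]
    ring
  rw [intervalIntegral.integral_congr (g := fun t =>
      (S2 - α * T1) * Real.cos t ^ 2 + (Q1 - α * Q2) * (Real.sin t * Real.cos t)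
        + (S1 - α * T2) * Real.sin t ^ 2) (fun t _ => hfun t)]
  -- compute the integral
  have i1 : IntervalIntegrable (fun t => (S2 - α * T1) * Real.cos t ^ 2)
      MeasureTheory.volume 0 (2 * Real.pi) :=
    (continuous_const.mul (Real.continuous_cos.pow 2)).intervalIntegrable _ _
  have i2 : IntervalIntegrable (fun t => (Q1 - α * Q2) * (Real.sin t * Real.cos t))
      MeasureTheory.volume 0 (2 * Real.pi) :=
    (continuous_const.mul (Real.continuous_sin.mul Real.continuous_cos)).intervalIntegrable _ _
  have i3 : IntervalIntegrable (fun t => (S1 - α * T2) * Real.sin t ^ 2)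
      MeasureTheory.volume 0 (2 * Real.pi) :=
    (continuous_const.mul (Real.continuous_sin.pow 2)).intervalIntegrable _ _
  rw [intervalIntegral.integral_add (i1.add i2) i3, intervalIntegral.integral_add i1 i2,
    intervalIntegral.integral_const_mul, intervalIntegral.integral_const_mul,
    intervalIntegral.integral_const_mul, integral_cos_sq, integral_sin_sq,
    integral_sin_mul_cos₁]
  simp only [Real.sin_two_pi, Real.cos_two_pi, Real.sin_zero, Real.cos_zero]
  -- identify the sums
  have hI : S1 + S2 = ∑ i, m i * ‖xbar i‖ ^ 2 := by
    rw [hS1, hS2, ← Finset.sum_add_distrib]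
    refine Finset.sum_congr rfl fun i _ => ?_
    have : A i ^ 2 + B i ^ 2 = ‖xbar i‖ ^ 2 := by
      rw [← hcnorm i, Complex.sq_norm, Complex.normSq_apply, hA, hB]
      ring
    linear_combination m i * this
  have hU : T1 + T2 = ∑ i, ∑ j ∈ Finset.univ.filter (fun j => i < j),
      m i * m j / ‖xbar i - xbar j‖ ^ α := by
    rw [hT1, hT2, ← Finset.sum_add_distrib]
    refine Finset.sum_congr rfl fun i _ => ?_
    rw [← Finset.sum_add_distrib]
    refine Finset.sum_congr rfl fun j hj => ?_
    have hij : i ≠ j := ne_of_lt (Finset.mem_filter.mp hj).2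
    have hd : (0:ℝ) < ‖xbar i - xbar j‖ := by
      rw [norm_pos_iff, sub_ne_zero]
      exact hcoll i j hij
    have hsq : (A i - A j) ^ 2 + (B i - B j) ^ 2 = ‖xbar i - xbar j‖ ^ 2 := by
      rw [← hcsub i j, Complex.sq_norm, Complex.normSq_apply,
        Complex.sub_re, Complex.sub_im, hA, hB]
      ring
    have hKij : K i j * ‖xbar i - xbar j‖ ^ 2 = m i * m j / ‖xbar i - xbar j‖ ^ α := by
      have hKdef : K i j = m i * m j / ‖xbar i - xbar j‖ ^ (α + 2) := rfl
      rw [hKdef]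
      have hpow : ‖xbar i - xbar j‖ ^ (α + 2) = ‖xbar i - xbar j‖ ^ α * ‖xbar i - xbar j‖ ^ 2 := by
        rw [Real.rpow_add hd, Real.rpow_two]
      have h1 : ‖xbar i - xbar j‖ ^ α ≠ 0 := ne_of_gt (Real.rpow_pos_of_pos hd α)
      have h2 : ‖xbar i - xbar j‖ ^ 2 ≠ 0 := pow_ne_zero 2 (ne_of_gt hd)
      rw [hpow, div_mul_eq_mul_div, mul_comm (‖xbar i - xbar j‖ ^ α) (‖xbar i - xbar j‖ ^ 2),
        ← div_div, mul_div_cancel_right₀ _ h2]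
    calc K i j * (A i - A j) ^ 2 + K i j * (B i - B j) ^ 2
        = K i j * ((A i - A j) ^ 2 + (B i - B j) ^ 2) := by ring
      _ = K i j * ‖xbar i - xbar j‖ ^ 2 := by rw [hsq]
      _ = m i * m j / ‖xbar i - xbar j‖ ^ α := hKij
  rw [← hI, ← hU]
  ring
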